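/- For m ≥ 3 and n ≥ 1, the kernel of the reduction map GL_n(ℤ) → GL_n(ℤ/mℤ) is torsion-free. -/

import Mathlib

/-- A monoid is torsion-free if no element besides `1` has finite order
(definition of Mathlib's former `Monoid.IsTorsionFree`). -/
def Monoid.IsTorsionFree (G : Type*) [Monoid G] : Prop :=
  ∀ g : G, g ≠ 1 → ¬IsOfFinOrder g

lemma mink_step {N : ℕ} {B : Matrix (Fin N) (Fin N) ℤ} {p q a : ℕ}
    (hp : p.Prime) (hq : q.Prime) (ha : 1 ≤ a) (ha2 : q = 2 → 2 ≤ a)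
    (hpow : (1 + B) ^ p = 1) (hdvd : ∀ i j, ((q : ℤ)) ^ a ∣ B i j) :
    ∀ i j, ((q : ℤ)) ^ (a + 1) ∣ B i j := by
  obtain ⟨t, rfl⟩ : ∃ t, p = t + 2 := ⟨p - 2, by have := hp.two_le; omega⟩
  choose C0 hC using fun i j => hdvd i j
  set C : Matrix (Fin N) (Fin N) ℤ := Matrix.of C0 with hCdef
  have hC : ∀ i j, B i j = (q:ℤ)^a * C i j := hC
  have hBC : B = ((q : ℤ) ^ a) • C := by
    ext i j; simp [Matrix.smul_apply, smul_eq_mul, hC i j]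
  have hq0 : (q : ℤ) ≠ 0 := by exact_mod_cast hq.ne_zero
  have hexp := (Commute.one_right B).add_pow (t + 2)
  rw [add_comm B 1] at hexp
  rw [hexp] at hpow
  have hmul : ∀ (X : Matrix (Fin N) (Fin N) ℤ) (c : ℕ),
      X * (c : Matrix (Fin N) (Fin N) ℤ) = c • X := by
    intro X c; rw [(Nat.cast_commute c X).eq.symm]; simp [nsmul_eq_mul]
  simp only [one_pow, mul_one, hmul] at hpow
  rw [Finset.sum_range_succ' _ (t + 2), Finset.sum_range_succ' _ (t + 1)] at hpow
  simp only [zero_add, pow_zero, pow_one, Nat.choose_zero_right, Nat.choose_one_right,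
    one_smul] at hpow
  have hmain : (t + 2) • B = -∑ k ∈ Finset.range (t + 1), ((t+2).choose (k+2)) • B ^ (k + 2) := by
    linear_combination (norm := abel) hpow
  have hBk : ∀ k : ℕ, B ^ (k + 2) = ((q:ℤ) ^ a) • (((q:ℤ) ^ ((k+1)*a)) • C ^ (k + 2)) := by
    intro k
    rw [hBC, smul_pow, ← pow_mul, show a * (k + 2) = a + (k+1)*a by ring, pow_add, mul_smul]
  have hC' : (t + 2) • C =
      -∑ k ∈ Finset.range (t + 1), ((t+2).choose (k+2)) • (((q:ℤ) ^ ((k+1)*a)) • C ^ (k + 2)) := by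
    apply smul_right_injective (Matrix (Fin N) (Fin N) ℤ) (pow_ne_zero a hq0)
    show (q:ℤ)^a • ((t + 2) • C) = (q:ℤ)^a •
      (-∑ k ∈ Finset.range (t + 1), ((t+2).choose (k+2)) • (((q:ℤ) ^ ((k+1)*a)) • C ^ (k + 2)))
    rw [smul_comm ((q:ℤ)^a), ← hBC, hmain, smul_neg, Finset.smul_sum]
    congr 1
    apply Finset.sum_congr rfl
    intro k _
    rw [hBk k, smul_comm]
  intro i j
  rw [hC i j]
  have hq2 : (q:ℤ) ∣ C i j := by
    have hentry : ((t : ℤ) + 2) * C i j =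
        -∑ k ∈ Finset.range (t + 1),
          ((t+2).choose (k+2) : ℤ) * ((q:ℤ) ^ ((k+1)*a) * (C ^ (k + 2)) i j) := by
      have h := congrFun (congrFun hC' i) j
      simp only [Matrix.sum_apply, Matrix.smul_apply, Matrix.neg_apply] at h
      simpa [smul_eq_mul, nsmul_eq_mul] using h
    by_cases hpq : q = t + 2
    · have h2 : ((q:ℤ))^2 ∣ ((t : ℤ) + 2) * C i j := by
        rw [hentry]
        apply dvd_neg.mpr
        apply Finset.dvd_sum
        intro k hk
        have hk' : k < t + 1 := Finset.mem_range.mp hk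
        rcases Nat.lt_or_ge k t with h | h
        · have hch : (q:ℤ) ∣ ((t+2).choose (k+2) : ℤ) := by
            apply Int.natCast_dvd_natCast.mpr
            rw [← hpq]
            exact hq.dvd_choose_self (by omega) (by omega)
          have hqq : (q:ℤ) ∣ (q:ℤ) ^ ((k+1)*a) :=
            dvd_pow_self _ (Nat.mul_pos (by omega) ha).ne'
          calc ((q:ℤ))^2 = q * q := by ring
          _ ∣ _ := mul_dvd_mul hch (hqq.mul_right _)
        · have h2le : 2 ≤ (k+1)*a := by
            rcases Nat.eq_zero_or_pos t with ht | ht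
            · have := ha2 (by omega)
              have hk0 : k = 0 := by omega
              subst hk0; simpa using this
            · exact le_trans (by omega : 2 ≤ k + 1) (Nat.le_mul_of_pos_right _ ha)
          exact Dvd.dvd.mul_left ((pow_dvd_pow (q:ℤ) h2le).mul_right _) _
      have hcast : ((t : ℤ) + 2) = (q:ℤ) := by rw [hpq]; push_cast; ring
      rw [hcast] at h2
      have : (q:ℤ) * (q:ℤ) ∣ (q:ℤ) * C i j := by
        calc (q:ℤ) * q = (q:ℤ)^2 := by ring
        _ ∣ _ := h2
      exact (mul_dvd_mul_iff_left hq0).mp this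
    · have h1 : (q:ℤ) ∣ ((t : ℤ) + 2) * C i j := by
        rw [hentry]
        apply dvd_neg.mpr
        apply Finset.dvd_sum
        intro k _
        exact ((dvd_pow_self (q:ℤ) (Nat.mul_pos (by omega) ha).ne').mul_right _).mul_left _
      have hqprime : Prime (q : ℤ) := Int.prime_iff_natAbs_prime.mpr (by simpa using hq)
      rcases hqprime.dvd_mul.mp h1 with h | h
      · exact absurd ((Nat.prime_dvd_prime_iff_eq hq hp).mp
          (Int.natCast_dvd_natCast.mp (by exact_mod_cast h))) hpq
      · exact h
  calc (q:ℤ) ^ (a + 1) = (q:ℤ)^a * q := by ring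
  _ ∣ (q:ℤ)^a * C i j := mul_dvd_mul_left _ hq2


lemma mink_qa {m : ℕ} (hm : 3 ≤ m) :
    ∃ q a : ℕ, q.Prime ∧ 1 ≤ a ∧ (q = 2 → 2 ≤ a) ∧ q ^ a ∣ m := by
  by_cases hodd : ∃ q, q.Prime ∧ q ∣ m ∧ q ≠ 2
  · obtain ⟨q, hq, hqm, hq2⟩ := hodd
    exact ⟨q, 1, hq, le_refl 1, fun h => absurd h hq2, by simpa using hqm⟩
  · push_neg at hodd
    have hm1 : m ≠ 1 := by omega
    have h2 : 2 ∣ m := by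
      have h := Nat.minFac_dvd m
      rwa [hodd _ (Nat.minFac_prime hm1) h] at h
    have hm2 : m / 2 ≠ 1 := by omega
    have h4 : 2 ∣ m / 2 := by
      have h := Nat.minFac_dvd (m / 2)
      rwa [hodd _ (Nat.minFac_prime hm2) (h.trans (Nat.div_dvd_of_dvd h2))] at h
    exact ⟨2, 2, Nat.prime_two, by omega, fun _ => le_refl 2, by norm_num; omega⟩


/-- Minkowski's lemma: for `m ≥ 3` and `n ≥ 1`, the kernel of the reduction map
`GL_n(ℤ) → GL_n(ℤ/mℤ)` is torsion-free. -/
theorem ker_reduction_GL_torsionFree (n m : ℕ) (hn : 1 ≤ n) (hm : 3 ≤ m) :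
    Monoid.IsTorsionFree
      (MonoidHom.ker (Units.map ((Int.castRingHom (ZMod m)).mapMatrix.toMonoidHom) :
        GL (Fin n) ℤ →* GL (Fin n) (ZMod m))) := by
  intro g hg1 hfin
  -- reduce to an element of prime order
  have hd0 : 0 < orderOf g := hfin.orderOf_pos
  have hd1 : orderOf g ≠ 1 := fun h => hg1 (orderOf_eq_one_iff.mp h)
  set p := (orderOf g).minFac with hpdef
  have hp : p.Prime := Nat.minFac_prime hd1
  set h := g ^ (orderOf g / p) with hhdef
  have hh1 : h ^ p = 1 := by
    rw [hhdef, ← pow_mul, Nat.div_mul_cancel (Nat.minFac_dvd _), pow_orderOf_eq_one]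
  have hhne : h ≠ 1 := by
    intro e
    have hdvd : orderOf g ∣ orderOf g / p := orderOf_dvd_of_pow_eq_one e
    have hlt : orderOf g / p < orderOf g := Nat.div_lt_self hd0 hp.one_lt
    rcases Nat.eq_zero_or_pos (orderOf g / p) with h0 | h0
    · have := Nat.mul_div_cancel' (Nat.minFac_dvd (orderOf g))
      rw [h0] at this
      omega
    · exact absurd (Nat.le_of_dvd h0 hdvd) (by omega)
  -- pass to integer matrices
  set M : Matrix (Fin n) (Fin n) ℤ := ((h : GL (Fin n) ℤ) : Matrix (Fin n) (Fin n) ℤ) with hMdef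
  have hM : M ^ p = 1 := by
    have := congrArg (fun x : (MonoidHom.ker (Units.map
        ((Int.castRingHom (ZMod m)).mapMatrix.toMonoidHom) :
        GL (Fin n) ℤ →* GL (Fin n) (ZMod m))) =>
      ((x : GL (Fin n) ℤ) : Matrix (Fin n) (Fin n) ℤ)) hh1
    simp only [Subgroup.coe_pow, Units.val_pow_eq_pow_val, Subgroup.coe_one, Units.val_one] at this
    exact this
  set B : Matrix (Fin n) (Fin n) ℤ := M - 1 with hBdef
  have hpowB : (1 + B) ^ p = 1 := by
    have h1 : 1 + B = M := by rw [hBdef]; abel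
    rw [h1]; exact hM
  -- kernel condition gives m ∣ B i j
  have hmem : (h : GL (Fin n) ℤ) ∈ MonoidHom.ker (Units.map
      ((Int.castRingHom (ZMod m)).mapMatrix.toMonoidHom) :
      GL (Fin n) ℤ →* GL (Fin n) (ZMod m)) := h.2
  rw [MonoidHom.mem_ker] at hmem
  have hred : M.map (Int.castRingHom (ZMod m)) = 1 := congrArg Units.val hmem
  have hker : ∀ i j, (m : ℤ) ∣ B i j := by
    intro i j
    have he : ((M i j : ℤ) : ZMod m) = (1 : Matrix (Fin n) (Fin n) (ZMod m)) i j := by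
      rw [← hred]; simp [Matrix.map_apply]
    rw [← ZMod.intCast_zmod_eq_zero_iff_dvd]
    have : B i j = M i j - (1 : Matrix (Fin n) (Fin n) ℤ) i j := by simp [hBdef]
    rw [this]
    push_cast
    rw [he]
    by_cases hij : i = j <;> simp [Matrix.one_apply, hij]
  -- B ≠ 0
  have hBne : B ≠ 0 := by
    intro e
    apply hhne
    have hM1 : M = 1 := by
      have : M - 1 = 0 := e
      rw [sub_eq_zero] at this; exact this
    apply Subtype.ext
    apply Units.ext
    exact hM1
  obtain ⟨i, j, hij⟩ : ∃ i j, B i j ≠ 0 := by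
    by_contra hc
    push_neg at hc
    exact hBne (by ext i j; simpa using hc i j)
  -- choose a suitable prime power q^a ∣ m
  obtain ⟨q, a, hq, ha, ha2, hqam⟩ := mink_qa hm
  have hbase : ∀ i' j', (q : ℤ) ^ a ∣ B i' j' := by
    intro i' j'
    exact dvd_trans (by exact_mod_cast Int.natCast_dvd_natCast.mpr hqam) (hker i' j')
  have hall : ∀ c, ∀ i' j', (q : ℤ) ^ (a + c) ∣ B i' j' := by
    intro c
    induction c with
    | zero => simpa using hbase
    | succ c ih =>
      have := mink_step hp hq (by omega : 1 ≤ a + c) (fun h2 => by have := ha2 h2; omega)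
        hpowB ih
      intro i' j'
      have h' := this i' j'
      rwa [show a + (c + 1) = a + c + 1 by omega]
  -- contradiction: unbounded divisibility of a nonzero integer
  set c := (B i j).natAbs with hcdef
  have hdvd : (q : ℤ) ^ (a + c) ∣ B i j := hall c i j
  have hnat : q ^ (a + c) ∣ c := by
    have := Int.natAbs_dvd_natAbs.mpr hdvd
    simpa [Int.natAbs_pow] using this
  have hcpos : 0 < c := by
    simp only [hcdef]
    exact Int.natAbs_pos.mpr hij
  have hle : q ^ (a + c) ≤ c := Nat.le_of_dvd hcpos hnat
  have hlt : c < 2 ^ c := Nat.lt_two_pow_self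
  have h2q : 2 ^ c ≤ q ^ (a + c) := by
    calc 2 ^ c ≤ q ^ c := Nat.pow_le_pow_left hq.two_le c
    _ ≤ q ^ (a + c) := Nat.pow_le_pow_right hq.pos (by omega)
  omega
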